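/- Let F = F̄·D where F̄ = (I − MR)^T ⊗_b (I − MR) with I − MR block-diagonal Hermitian, and D any matrix. Then ρ(F) ≤ ρ(I − MR)² · ‖D‖_{b,∞}, and consequently ρ(F) < 1 whenever ρ(I − MR) < 1/√(‖D‖_{b,∞}). -/

import Mathlib

open Matrix Kronecker

/-- Block maximum norm of a block vector. -/
noncomputable def bvecNorm {o m : Type*} [Fintype o] [Fintype m]
    (x : o × m → ℂ) : ℝ :=
  ⨆ k : o, Real.sqrt (∑ j : m, ‖x (k, j)‖ ^ 2)

/-- Block maximum norm of a matrix: the norm induced by the block maximum vector norm. -/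
noncomputable def bmatNorm {o m : Type*} [Fintype o] [Fintype m]
    (Y : Matrix (o × m) (o × m) ℂ) : ℝ :=
  sSup {c : ℝ | ∃ x : o × m → ℂ, bvecNorm x ≤ 1 ∧ c = bvecNorm (Y.mulVec x)}

/-- Block Kronecker (Tracy–Singh) product of two `M×M`-block-partitioned matrices:
the block in position `((i,k),(j,l))` is `A_{ij} ⊗ B_{kl}`. -/
def blockKron {N M : ℕ} (A B : Matrix (Fin N × Fin M) (Fin N × Fin M) ℂ) :
    Matrix ((Fin N × Fin N) × (Fin M × Fin M)) ((Fin N × Fin N) × (Fin M × Fin M)) ℂ :=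
  fun p q => A (p.1.1, p.2.1) (q.1.1, q.2.1) * B (p.1.2, p.2.2) (q.1.2, q.2.2)

section Aux

open scoped Matrix.Norms.L2Operator

noncomputable instance matCStar {M : ℕ} : CStarAlgebra (Matrix (Fin M) (Fin M) ℂ) :=
  Matrix.instCStarAlgebra

variable {M : ℕ}

lemma key1 (A : Matrix (Fin M) (Fin M) ℂ) (v : Fin M → ℂ) :
    Real.sqrt (∑ i, ‖(A *ᵥ v) i‖ ^ 2) ≤ ‖A‖ * Real.sqrt (∑ i, ‖v i‖ ^ 2) := by
  have h := A.l2_opNorm_mulVec ((WithLp.equiv 2 _).symm v)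
  simpa [EuclideanSpace.norm_eq] using h

lemma key2 (A : Matrix (Fin M) (Fin M) ℂ) (v : Fin M → ℂ) :
    ∑ i, ‖(A *ᵥ v) i‖ ^ 2 ≤ ‖A‖ ^ 2 * ∑ i, ‖v i‖ ^ 2 := by
  have h := key1 A v
  have h1 : (0:ℝ) ≤ ∑ i, ‖(A *ᵥ v) i‖ ^ 2 := Finset.sum_nonneg fun _ _ => sq_nonneg _
  have h2 : (0:ℝ) ≤ ∑ i, ‖v i‖ ^ 2 := Finset.sum_nonneg fun _ _ => sq_nonneg _
  calc ∑ i, ‖(A *ᵥ v) i‖ ^ 2 = (Real.sqrt (∑ i, ‖(A *ᵥ v) i‖ ^ 2)) ^ 2 := (Real.sq_sqrt h1).symm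
    _ ≤ (‖A‖ * Real.sqrt (∑ i, ‖v i‖ ^ 2)) ^ 2 := by
        apply pow_le_pow_left₀ (Real.sqrt_nonneg _) h
    _ = ‖A‖ ^ 2 * ∑ i, ‖v i‖ ^ 2 := by rw [mul_pow, Real.sq_sqrt h2]

lemma key3 {A : Matrix (Fin M) (Fin M) ℂ} (hA : A.IsHermitian) (v : Fin M → ℂ) :
    ∑ i, ‖(Aᵀ *ᵥ v) i‖ ^ 2 ≤ ‖A‖ ^ 2 * ∑ i, ‖v i‖ ^ 2 := by
  have hpt : ∀ i, (Aᵀ *ᵥ v) i = star ((A *ᵥ star v) i) := by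
    intro i
    simp only [mulVec, dotProduct, transpose_apply, Pi.star_apply, star_sum, star_mul']
    refine Finset.sum_congr rfl fun j _ => ?_
    rw [hA.apply j i, star_star]
  calc ∑ i, ‖(Aᵀ *ᵥ v) i‖ ^ 2 = ∑ i, ‖(A *ᵥ star v) i‖ ^ 2 := by
        refine Finset.sum_congr rfl fun i _ => ?_; rw [hpt i, norm_star]
    _ ≤ ‖A‖ ^ 2 * ∑ i, ‖(star v) i‖ ^ 2 := key2 A (star v)
    _ = ‖A‖ ^ 2 * ∑ i, ‖v i‖ ^ 2 := by simp

lemma key4 {A B : Matrix (Fin M) (Fin M) ℂ} (hA : A.IsHermitian)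
    (V : Matrix (Fin M) (Fin M) ℂ) :
    ∑ m1, ∑ m2, ‖(Aᵀ * V * Bᵀ) m1 m2‖ ^ 2 ≤
      (‖A‖ * ‖B‖) ^ 2 * ∑ m1, ∑ m2, ‖V m1 m2‖ ^ 2 := by
  have stepA : ∀ W : Matrix (Fin M) (Fin M) ℂ,
      ∑ m1, ∑ m2, ‖(Aᵀ * W) m1 m2‖ ^ 2 ≤ ‖A‖ ^ 2 * ∑ m1, ∑ m2, ‖W m1 m2‖ ^ 2 := by
    intro W
    rw [Finset.sum_comm, Finset.sum_comm (s := Finset.univ) (f := fun m1 m2 => ‖W m1 m2‖^2),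
      Finset.mul_sum]
    refine Finset.sum_le_sum fun m2 _ => ?_
    have hcol : ∀ m1, (Aᵀ * W) m1 m2 = (Aᵀ *ᵥ fun j => W j m2) m1 := by
      intro m1; simp [mul_apply, mulVec, dotProduct]
    simp_rw [hcol]
    exact key3 hA _
  have stepB : ∑ m1, ∑ m2, ‖(V * Bᵀ) m1 m2‖ ^ 2 ≤ ‖B‖ ^ 2 * ∑ m1, ∑ m2, ‖V m1 m2‖ ^ 2 := by
    rw [Finset.mul_sum]
    refine Finset.sum_le_sum fun m1 _ => ?_
    have hrow : ∀ m2, (V * Bᵀ) m1 m2 = (B *ᵥ fun j => V m1 j) m2 := by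
      intro m2; simp [mul_apply, mulVec, dotProduct, mul_comm]
    simp_rw [hrow]
    exact key2 B _
  calc ∑ m1, ∑ m2, ‖(Aᵀ * V * Bᵀ) m1 m2‖ ^ 2
      = ∑ m1, ∑ m2, ‖(Aᵀ * (V * Bᵀ)) m1 m2‖ ^ 2 := by rw [Matrix.mul_assoc]
    _ ≤ ‖A‖ ^ 2 * ∑ m1, ∑ m2, ‖(V * Bᵀ) m1 m2‖ ^ 2 := stepA _
    _ ≤ ‖A‖ ^ 2 * (‖B‖ ^ 2 * ∑ m1, ∑ m2, ‖V m1 m2‖ ^ 2) := by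
        apply mul_le_mul_of_nonneg_left stepB (sq_nonneg _)
    _ = (‖A‖ * ‖B‖) ^ 2 * ∑ m1, ∑ m2, ‖V m1 m2‖ ^ 2 := by ring

lemma hermitian_norm_le_spectralRadius {A : Matrix (Fin M) (Fin M) ℂ} (hA : A.IsHermitian) :
    ENNReal.ofReal ‖A‖ ≤ spectralRadius ℂ A := by
  have hsa : IsSelfAdjoint A := by
    show star A = A
    rw [Matrix.star_eq_conjTranspose]; exact hA
  rw [hsa.spectralRadius_eq_nnnorm]; exact (ofReal_norm A).le

end Aux

section BNorm

variable {o m : Type*} [Fintype o] [Fintype m]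

lemma bvecNorm_nonneg (x : o × m → ℂ) : 0 ≤ bvecNorm x :=
  Real.iSup_nonneg fun _ => Real.sqrt_nonneg _

lemma block_le_bvecNorm (x : o × m → ℂ) (k : o) :
    Real.sqrt (∑ j, ‖x (k, j)‖ ^ 2) ≤ bvecNorm x := by
  unfold bvecNorm
  exact le_ciSup (f := fun k : o => Real.sqrt (∑ j, ‖x (k, j)‖ ^ 2))
    (Set.Finite.bddAbove (Set.finite_range _)) k

lemma norm_entry_le_bvecNorm (x : o × m → ℂ) (q : o × m) : ‖x q‖ ≤ bvecNorm x := by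
  refine le_trans ?_ (block_le_bvecNorm x q.1)
  rw [show ‖x q‖ = Real.sqrt (‖x (q.1, q.2)‖ ^ 2) by rw [Real.sqrt_sq (norm_nonneg _)]]
  exact Real.sqrt_le_sqrt (Finset.single_le_sum (fun j _ => sq_nonneg ‖x (q.1, j)‖)
    (Finset.mem_univ q.2))

lemma bvecNorm_zero : bvecNorm (0 : o × m → ℂ) = 0 := by
  unfold bvecNorm
  cases isEmpty_or_nonempty o
  · exact Real.iSup_of_isEmpty _
  · simp

lemma bvecNorm_pos {x : o × m → ℂ} (hx : x ≠ 0) : 0 < bvecNorm x := by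
  obtain ⟨q, hq⟩ : ∃ q, x q ≠ 0 := by
    by_contra h; push_neg at h; exact hx (funext h)
  exact lt_of_lt_of_le (norm_pos_iff.mpr hq) (norm_entry_le_bvecNorm x q)

lemma bvecNorm_smul (c : ℂ) (x : o × m → ℂ) :
    bvecNorm (c • x) = ‖c‖ * bvecNorm x := by
  unfold bvecNorm
  rw [Real.mul_iSup_of_nonneg (norm_nonneg c)]
  congr 1; funext k
  have h : ∀ j, ‖(c • x) (k, j)‖ ^ 2 = ‖c‖ ^ 2 * ‖x (k, j)‖ ^ 2 := fun j => by
    simp [norm_smul, mul_pow]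
  simp_rw [h, ← Finset.mul_sum, Real.sqrt_mul (sq_nonneg _), Real.sqrt_sq (norm_nonneg c)]

lemma bmatNorm_set_bddAbove [Nonempty o] (Y : Matrix (o × m) (o × m) ℂ) :
    BddAbove {c : ℝ | ∃ x : o × m → ℂ, bvecNorm x ≤ 1 ∧ c = bvecNorm (Y.mulVec x)} := by
  classical
  refine ⟨Finset.univ.sup' Finset.univ_nonempty
      (fun k => Real.sqrt (∑ j, (∑ q, ‖Y (k, j) q‖) ^ 2)), ?_⟩
  rintro c ⟨x, hx, rfl⟩
  refine ciSup_le fun k => ?_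
  refine le_trans ?_ (Finset.le_sup'
    (fun k => Real.sqrt (∑ j, (∑ q, ‖Y (k, j) q‖) ^ 2)) (Finset.mem_univ k))
  refine Real.sqrt_le_sqrt (Finset.sum_le_sum fun j _ => ?_)
  have hentry : ∀ q, ‖x q‖ ≤ 1 := fun q => le_trans (norm_entry_le_bvecNorm x q) hx
  have h1 : ‖(Y *ᵥ x) (k, j)‖ ≤ ∑ q, ‖Y (k, j) q‖ := by
    refine le_trans (norm_sum_le _ _) (Finset.sum_le_sum fun q _ => ?_)
    rw [norm_mul]
    exact mul_le_of_le_one_right (norm_nonneg _) (hentry q)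
  exact pow_le_pow_left₀ (norm_nonneg _) h1 2

lemma bvecNorm_mulVec_le_bmatNorm [Nonempty o] (Y : Matrix (o × m) (o × m) ℂ)
    (x : o × m → ℂ) : bvecNorm (Y *ᵥ x) ≤ bmatNorm Y * bvecNorm x := by
  rcases eq_or_ne x 0 with rfl | hx
  · simp [Matrix.mulVec_zero, bvecNorm_zero]
  · have hpos : 0 < bvecNorm x := bvecNorm_pos hx
    set t := bvecNorm x with ht
    have hnorm : ‖((t : ℂ))⁻¹‖ = t⁻¹ := by
      rw [norm_inv, Complex.norm_real, Real.norm_eq_abs, abs_of_pos hpos]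
    have h1 : bvecNorm (((t : ℂ))⁻¹ • x) = 1 := by
      rw [bvecNorm_smul, hnorm, ← ht, inv_mul_cancel₀ (ne_of_gt hpos)]
    have hmem : bvecNorm (Y *ᵥ (((t : ℂ))⁻¹ • x)) ∈
        {c : ℝ | ∃ x : o × m → ℂ, bvecNorm x ≤ 1 ∧ c = bvecNorm (Y.mulVec x)} :=
      ⟨_, le_of_eq h1, rfl⟩
    have h2 := le_csSup (bmatNorm_set_bddAbove Y) hmem
    have h3 : Y *ᵥ x = (t : ℂ) • (Y *ᵥ (((t : ℂ))⁻¹ • x)) := by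
      rw [Matrix.mulVec_smul, smul_smul, mul_inv_cancel₀, one_smul]
      exact_mod_cast ne_of_gt hpos
    rw [h3, bvecNorm_smul, Complex.norm_real, Real.norm_eq_abs, abs_of_pos hpos, mul_comm]
    exact mul_le_mul_of_nonneg_right h2 (le_of_lt hpos)

end BNorm

section Spectra

lemma eig_of_mem_spectrum {n : Type*} [Fintype n] [DecidableEq n]
    {A : Matrix n n ℂ} {μ : ℂ} (h : μ ∈ spectrum ℂ A) :
    ∃ v : n → ℂ, v ≠ 0 ∧ A *ᵥ v = μ • v := by
  rw [spectrum.mem_iff, Matrix.isUnit_iff_isUnit_det, isUnit_iff_ne_zero, not_not] at h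
  obtain ⟨v, hv0, hv⟩ := (Matrix.exists_mulVec_eq_zero_iff).mpr h
  refine ⟨v, hv0, ?_⟩
  rw [Algebra.algebraMap_eq_smul_one, Matrix.sub_mulVec, Matrix.smul_mulVec,
    Matrix.one_mulVec, sub_eq_zero] at hv
  exact hv.symm

lemma mem_spectrum_of_eig {n : Type*} [Fintype n] [DecidableEq n]
    {A : Matrix n n ℂ} {μ : ℂ} {v : n → ℂ} (hv0 : v ≠ 0) (hv : A *ᵥ v = μ • v) :
    μ ∈ spectrum ℂ A := by
  rw [spectrum.mem_iff, Matrix.isUnit_iff_isUnit_det, isUnit_iff_ne_zero, not_not]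
  refine (Matrix.exists_mulVec_eq_zero_iff).mp ⟨v, hv0, ?_⟩
  rw [Algebra.algebraMap_eq_smul_one, Matrix.sub_mulVec, Matrix.smul_mulVec,
    Matrix.one_mulVec, hv, sub_self]

lemma S_entry {N M : ℕ} (Sb : Fin N → Matrix (Fin M) (Fin M) ℂ)
    (S : Matrix (Fin N × Fin M) (Fin N × Fin M) ℂ)
    (hS : S = ∑ k : Fin N, (Matrix.single k k (1 : ℂ)) ⊗ₖ Sb k)
    (a b : Fin N) (x y : Fin M) :
    S (a, x) (b, y) = if a = b then Sb a x y else 0 := by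
  subst hS
  simp only [Finset.sum_apply, Matrix.sum_apply, Matrix.kroneckerMap_apply,
    Matrix.single, Matrix.of_apply]
  by_cases hab : a = b
  · subst hab
    rw [Finset.sum_eq_single a]
    · simp
    · intro t _ ht
      rw [if_neg (fun h => ht h.1), zero_mul]
    · simp
  · rw [Finset.sum_eq_zero, if_neg hab]
    intro t _
    by_cases hta : t = a
    · subst hta; simp [hab]
    · rw [if_neg (fun h => hta h.1), zero_mul]

lemma spectrum_block_subset {N M : ℕ} (Sb : Fin N → Matrix (Fin M) (Fin M) ℂ)
    (S : Matrix (Fin N × Fin M) (Fin N × Fin M) ℂ)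
    (hS : S = ∑ k : Fin N, (Matrix.single k k (1 : ℂ)) ⊗ₖ Sb k)
    (k : Fin N) : spectrum ℂ (Sb k) ⊆ spectrum ℂ S := by
  intro μ hμ
  obtain ⟨v, hv0, hv⟩ := eig_of_mem_spectrum hμ
  set w : Fin N × Fin M → ℂ := fun p => if p.1 = k then v p.2 else 0 with hw
  have hw0 : w ≠ 0 := by
    obtain ⟨j, hj⟩ : ∃ j, v j ≠ 0 := by
      by_contra h; push_neg at h; exact hv0 (funext h)
    intro h
    apply hj
    have := congrFun h (k, j)
    simpa [hw] using this
  refine mem_spectrum_of_eig hw0 ?_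
  funext p
  obtain ⟨a, x⟩ := p
  have hrow : (S *ᵥ w) (a, x) = if a = k then (Sb k *ᵥ v) x else 0 := by
    simp only [Matrix.mulVec, dotProduct, Fintype.sum_prod_type]
    by_cases hak : a = k
    · subst hak
      simp only [if_pos rfl]
      rw [Finset.sum_eq_single a]
      · simp [hw, S_entry Sb S hS, Matrix.mulVec, dotProduct]
      · intro b _ hb
        apply Finset.sum_eq_zero; intro y _
        simp [hw, hb]
      · simp
    · rw [if_neg hak]
      apply Finset.sum_eq_zero; intro b _
      apply Finset.sum_eq_zero; intro y _
      rw [S_entry Sb S hS]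
      by_cases hab : a = b
      · subst hab
        simp [hw, hak]
      · simp [hab]
  rw [hrow, hv]
  by_cases hak : a = k
  · subst hak; simp [hw]
  · simp [hw, hak]

lemma Fbar_apply {N M : ℕ} (Sb : Fin N → Matrix (Fin M) (Fin M) ℂ)
    (S : Matrix (Fin N × Fin M) (Fin N × Fin M) ℂ)
    (hSe : ∀ a b x y, S (a, x) (b, y) = if a = b then Sb a x y else 0)
    (y : (Fin N × Fin N) × (Fin M × Fin M) → ℂ) (i k : Fin N) (m1 m2 : Fin M) :
    (blockKron Sᵀ S *ᵥ y) ((i, k), (m1, m2)) =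
      ((Sb i)ᵀ * (Matrix.of fun a b => y ((i, k), (a, b))) * (Sb k)ᵀ) m1 m2 := by
  simp only [Matrix.mulVec, dotProduct, blockKron, Matrix.transpose_apply, hSe,
    Fintype.sum_prod_type]
  rw [Finset.sum_eq_single i]
  · rw [Finset.sum_eq_single k]
    · simp only [if_pos rfl, Matrix.mul_apply, Matrix.transpose_apply, Matrix.of_apply]
      rw [Finset.sum_comm]
      refine Finset.sum_congr rfl fun m2' _ => ?_
      simp only [if_true, Finset.sum_mul]
      exact Finset.sum_congr rfl fun m1' _ => by ring
    · intro l _ hl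
      apply Finset.sum_eq_zero; intro m1' _
      apply Finset.sum_eq_zero; intro m2' _
      rw [if_neg (Ne.symm hl)]
      ring
    · simp
  · intro j _ hj
    apply Finset.sum_eq_zero; intro l _
    apply Finset.sum_eq_zero; intro m1' _
    apply Finset.sum_eq_zero; intro m2' _
    rw [if_neg hj]
    ring
  · simp

end Spectra

set_option maxHeartbeats 2000000 in
/-- Mean-square stability: with `S = I − MR` block-diagonal Hermitian,
`F̄ = Sᵀ ⊗_b S` and `F = F̄ D`, the spectral radius satisfies
`ρ(F) ≤ ρ(S)² ‖D‖_{b,∞}`, and `ρ(F) < 1` whenever `ρ(S) < 1/√‖D‖_{b,∞}`. -/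
theorem mean_square_stability_bound
    {N M : ℕ} (Sb : Fin N → Matrix (Fin M) (Fin M) ℂ)
    (hHerm : ∀ k, (Sb k).IsHermitian)
    (S : Matrix (Fin N × Fin M) (Fin N × Fin M) ℂ)
    (hS : S = ∑ k : Fin N, (Matrix.single k k (1 : ℂ)) ⊗ₖ Sb k)
    (D F : Matrix ((Fin N × Fin N) × (Fin M × Fin M)) ((Fin N × Fin N) × (Fin M × Fin M)) ℂ)
    (hD : 0 < bmatNorm D)
    (hF : F = blockKron Sᵀ S * D) :
    spectralRadius ℂ F ≤ (spectralRadius ℂ S) ^ 2 * ENNReal.ofReal (bmatNorm D) ∧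
    (spectralRadius ℂ S < ENNReal.ofReal (1 / Real.sqrt (bmatNorm D)) →
      spectralRadius ℂ F < 1) := by
  classical
  by_cases hNM : N = 0 ∨ M = 0
  · -- degenerate case: the index type of `F` is empty
    have hE : IsEmpty ((Fin N × Fin N) × (Fin M × Fin M)) := by
      rcases hNM with h | h <;> subst h <;> infer_instance
    have hsub : Subsingleton
        (Matrix ((Fin N × Fin N) × (Fin M × Fin M)) ((Fin N × Fin N) × (Fin M × Fin M)) ℂ) :=
      ⟨fun A B => Matrix.ext fun p _ => (hE.false p).elim⟩
    have hspec : spectrum ℂ F = ∅ :=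
      Set.eq_empty_iff_forall_notMem.mpr fun μ hμ =>
        (spectrum.mem_iff.mp hμ) (isUnit_of_subsingleton _)
    have hρF : spectralRadius ℂ F = 0 := by
      unfold spectralRadius
      rw [hspec]
      simp
    constructor
    · rw [hρF]; exact zero_le
    · intro _; rw [hρF]; exact zero_lt_one
  · push_neg at hNM
    have hNpos : 0 < N := Nat.pos_of_ne_zero hNM.1
    have hMpos : 0 < M := Nat.pos_of_ne_zero hNM.2
    haveI : Nonempty (Fin N) := Fin.pos_iff_nonempty.mp hNpos
    haveI : Nonempty (Fin M) := Fin.pos_iff_nonempty.mp hMpos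
    have hSe := S_entry Sb S hS
    set d := bmatNorm D with hd
    set R : ℝ := Finset.univ.sup' Finset.univ_nonempty (fun k : Fin N => ‖Sb k‖) with hRdef
    have hRk : ∀ k, ‖Sb k‖ ≤ R := fun k => by
      rw [hRdef]
      exact Finset.le_sup' (fun k : Fin N => ‖Sb k‖) (Finset.mem_univ k)
    have hR0 : 0 ≤ R := le_trans (norm_nonneg (Sb (Classical.arbitrary _))) (hRk _)
    -- the block-diagonal bound on `F̄`
    have hFbar : ∀ y : (Fin N × Fin N) × (Fin M × Fin M) → ℂ,
        bvecNorm (blockKron Sᵀ S *ᵥ y) ≤ R ^ 2 * bvecNorm y := by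
      intro y
      refine ciSup_le fun p => ?_
      obtain ⟨i, k⟩ := p
      set V : Matrix (Fin M) (Fin M) ℂ := Matrix.of fun a b => y ((i, k), (a, b)) with hV
      have heq : ∀ j : Fin M × Fin M,
          (blockKron Sᵀ S *ᵥ y) ((i, k), j) = ((Sb i)ᵀ * V * (Sb k)ᵀ) j.1 j.2 := by
        rintro ⟨m1, m2⟩
        exact Fbar_apply Sb S hSe y i k m1 m2
      calc Real.sqrt (∑ j : Fin M × Fin M, ‖(blockKron Sᵀ S *ᵥ y) ((i, k), j)‖ ^ 2)
          = Real.sqrt (∑ m1, ∑ m2, ‖((Sb i)ᵀ * V * (Sb k)ᵀ) m1 m2‖ ^ 2) := by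
            rw [Fintype.sum_prod_type]
            congr 1
            refine Finset.sum_congr rfl fun m1 _ => Finset.sum_congr rfl fun m2 _ => ?_
            rw [heq (m1, m2)]
        _ ≤ Real.sqrt ((‖Sb i‖ * ‖Sb k‖) ^ 2 * ∑ m1, ∑ m2, ‖V m1 m2‖ ^ 2) :=
            Real.sqrt_le_sqrt (key4 (hHerm i) V)
        _ = ‖Sb i‖ * ‖Sb k‖ * Real.sqrt (∑ m1, ∑ m2, ‖V m1 m2‖ ^ 2) := by
            rw [Real.sqrt_mul (sq_nonneg _), Real.sqrt_sq (mul_nonneg (norm_nonneg _) (norm_nonneg _))]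
        _ ≤ R ^ 2 * Real.sqrt (∑ m1, ∑ m2, ‖V m1 m2‖ ^ 2) := by
            apply mul_le_mul_of_nonneg_right _ (Real.sqrt_nonneg _)
            rw [pow_two]
            exact mul_le_mul (hRk i) (hRk k) (norm_nonneg _) hR0
        _ ≤ R ^ 2 * bvecNorm y := by
            apply mul_le_mul_of_nonneg_left _ (by positivity)
            have hb := block_le_bvecNorm y (i, k)
            rw [Fintype.sum_prod_type] at hb
            exact hb
    -- the core eigenvalue bound
    have hcore : ∀ ν ∈ spectrum ℂ F, ‖ν‖ ≤ R ^ 2 * d := by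
      intro ν hν
      obtain ⟨x, hx0, hx⟩ := eig_of_mem_spectrum hν
      have h1 : bvecNorm (ν • x) ≤ R ^ 2 * (d * bvecNorm x) := by
        rw [← hx, hF, ← Matrix.mulVec_mulVec]
        exact le_trans (hFbar _)
          (mul_le_mul_of_nonneg_left (bvecNorm_mulVec_le_bmatNorm D x) (by positivity))
      rw [bvecNorm_smul] at h1
      have hxpos : 0 < bvecNorm x := bvecNorm_pos hx0
      have h2 : ‖ν‖ * bvecNorm x ≤ (R ^ 2 * d) * bvecNorm x := by
        calc ‖ν‖ * bvecNorm x ≤ R ^ 2 * (d * bvecNorm x) := h1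
          _ = (R ^ 2 * d) * bvecNorm x := by ring
      exact le_of_mul_le_mul_right h2 hxpos
    -- relate R to the spectral radius of S
    have hRS : ENNReal.ofReal R ≤ spectralRadius ℂ S := by
      obtain ⟨k0, _, hk0⟩ := Finset.exists_mem_eq_sup' (Finset.univ_nonempty)
        (fun k : Fin N => ‖Sb k‖)
      rw [hRdef, hk0]
      calc ENNReal.ofReal ‖Sb k0‖ ≤ spectralRadius ℂ (Sb k0) :=
            hermitian_norm_le_spectralRadius (hHerm k0)
        _ ≤ spectralRadius ℂ S := by
            unfold spectralRadius
            exact iSup₂_le fun μ hμ =>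
              le_iSup₂ (f := fun k (_ : k ∈ spectrum ℂ S) => (‖k‖₊ : ENNReal)) μ
                (spectrum_block_subset Sb S hS k0 hμ)
    -- part 1
    have hpart1 : spectralRadius ℂ F ≤ (spectralRadius ℂ S) ^ 2 * ENNReal.ofReal d := by
      unfold spectralRadius
      refine iSup₂_le fun ν hν => ?_
      calc (‖ν‖₊ : ENNReal) = ENNReal.ofReal ‖ν‖ := (ofReal_norm ν).symm
        _ ≤ ENNReal.ofReal (R ^ 2 * d) := ENNReal.ofReal_le_ofReal (hcore ν hν)
        _ = ENNReal.ofReal R * ENNReal.ofReal R * ENNReal.ofReal d := by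
            rw [pow_two, ← ENNReal.ofReal_mul hR0, ← ENNReal.ofReal_mul (by positivity)]
        _ ≤ (⨆ k ∈ spectrum ℂ S, (‖k‖₊ : ENNReal)) * (⨆ k ∈ spectrum ℂ S, (‖k‖₊ : ENNReal))
              * ENNReal.ofReal d := by
            exact mul_le_mul' (mul_le_mul' hRS hRS) le_rfl
        _ = (⨆ k ∈ spectrum ℂ S, (‖k‖₊ : ENNReal)) ^ 2 * ENNReal.ofReal d := by
            rw [pow_two]
    refine ⟨hpart1, fun hlt => ?_⟩
    refine lt_of_le_of_lt hpart1 ?_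
    have hd0 : ENNReal.ofReal d ≠ 0 := (ENNReal.ofReal_pos.mpr hD).ne'
    calc (spectralRadius ℂ S) ^ 2 * ENNReal.ofReal d
        < (ENNReal.ofReal (1 / Real.sqrt d)) ^ 2 * ENNReal.ofReal d := by
          rw [ENNReal.mul_lt_mul_iff_left hd0 ENNReal.ofReal_ne_top]
          exact ENNReal.pow_lt_pow_left (by norm_num) hlt
      _ = 1 := by
          rw [← ENNReal.ofReal_pow (by positivity), ← ENNReal.ofReal_mul (by positivity)]
          rw [div_pow, one_pow, Real.sq_sqrt hD.le, one_div, inv_mul_cancel₀ (ne_of_gt hD)]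
          exact ENNReal.ofReal_one
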